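/- For every natural number m there exist complex numbers c_0, …, c_m and d_0, …, d_m, with c_0 = m! and d_0 = (−1)^{m+1} m!, such that for every real λ ≠ 0: ∫_{−1}^0 e^{iλs} (−s)^m (1+s)^m ds = Σ_{k=0}^m c_k (iλ)^{−(m+1+k)} + e^{−iλ} · Σ_{k=0}^m d_k (iλ)^{−(m+1+k)}. -/

import Mathlib

open scoped Real

open Polynomial in
/-- Derivative (in a real variable) of `t ↦ P.eval (t : ℂ)`. -/
lemma poly_hasDerivAt (P : Polynomial ℂ) (t : ℝ) :
    HasDerivAt (fun s : ℝ => P.eval (s : ℂ)) (P.derivative.eval (t : ℂ)) t :=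
  (P.hasDerivAt (t : ℂ)).comp_ofReal

open Polynomial in
/-- Value of iterated derivative via Taylor coefficients. -/
lemma iter_deriv_eval (P : Polynomial ℂ) (j : ℕ) (r : ℂ) :
    (derivative^[j] P).eval r = (j.factorial : ℂ) * (taylor r P).coeff j := by
  rw [← factorial_smul_hasseDeriv]
  simp [taylor_coeff, smul_eq_mul]

open Polynomial in
/-- Integration by parts identity for `∫ e^{μ s} P(s) ds` over `[-1, 0]`. -/
lemma ibp_key (P : Polynomial ℂ) (N : ℕ) (hN : P.natDegree ≤ N) (μ : ℂ) (hμ : μ ≠ 0) :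
    (∫ s in (-1 : ℝ)..0, Complex.exp (μ * s) * P.eval (s : ℂ))
      = (∑ j ∈ Finset.range (N + 1),
          (-1 : ℂ) ^ j * μ ^ (-(j + 1 : ℤ)) * (derivative^[j] P).eval (0 : ℂ))
        - Complex.exp (-μ) * ∑ j ∈ Finset.range (N + 1),
          (-1 : ℂ) ^ j * μ ^ (-(j + 1 : ℤ)) * (derivative^[j] P).eval (-1 : ℂ) := by
  set F : ℝ → ℂ := fun t => Complex.exp (μ * t) *
    ∑ j ∈ Finset.range (N + 1),
      (-1 : ℂ) ^ j * μ ^ (-(j + 1 : ℤ)) * (derivative^[j] P).eval (t : ℂ) with hF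
  have hderiv : ∀ t : ℝ, HasDerivAt F (Complex.exp (μ * t) * P.eval (t : ℂ)) t := by
    intro t
    have hexp : HasDerivAt (fun s : ℝ => Complex.exp (μ * s)) (Complex.exp (μ * t) * μ) t := by
      have h1 : HasDerivAt (fun s : ℝ => (μ * s : ℂ)) μ t := by
        simpa using (Complex.ofRealCLM.hasDerivAt (x := t)).const_mul μ
      exact h1.cexp
    have hsum : HasDerivAt (fun s : ℝ => ∑ j ∈ Finset.range (N + 1),
        (-1 : ℂ) ^ j * μ ^ (-(j + 1 : ℤ)) * (derivative^[j] P).eval (s : ℂ))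
        (∑ j ∈ Finset.range (N + 1),
          (-1 : ℂ) ^ j * μ ^ (-(j + 1 : ℤ)) * (derivative^[j + 1] P).eval (t : ℂ)) t := by
      refine HasDerivAt.fun_sum fun j _ => ?_
      have := (poly_hasDerivAt (derivative^[j] P) t).const_mul
        ((-1 : ℂ) ^ j * μ ^ (-(j + 1 : ℤ)))
      simpa [Function.iterate_succ_apply', mul_assoc] using this
    have hmul := hexp.mul hsum
    refine hmul.congr_deriv ?_
    have htel : μ * (∑ j ∈ Finset.range (N + 1),
          (-1 : ℂ) ^ j * μ ^ (-(j + 1 : ℤ)) * (derivative^[j] P).eval (t : ℂ))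
        + (∑ j ∈ Finset.range (N + 1),
          (-1 : ℂ) ^ j * μ ^ (-(j + 1 : ℤ)) * (derivative^[j + 1] P).eval (t : ℂ))
        = P.eval (t : ℂ) := by
      set g : ℕ → ℂ := fun j => (-1 : ℂ) ^ j * μ ^ (-(j : ℤ)) * (derivative^[j] P).eval (t : ℂ)
        with hg
      have hterm : ∀ j : ℕ, μ * ((-1 : ℂ) ^ j * μ ^ (-((j : ℤ) + 1)) * (derivative^[j] P).eval (t : ℂ))
          + (-1 : ℂ) ^ j * μ ^ (-((j : ℤ) + 1)) * (derivative^[j + 1] P).eval (t : ℂ)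
          = g j - g (j + 1) := by
        intro j
        have h1 : μ * μ ^ (-((j : ℤ) + 1)) = μ ^ (-(j : ℤ)) := by
          have he : (-(j : ℤ)) = 1 + (-((j : ℤ) + 1)) := by ring
          rw [he, zpow_add₀ hμ, zpow_one]
        have h2 : (g (j + 1) : ℂ) = -((-1 : ℂ) ^ j * μ ^ (-((j : ℤ) + 1))
            * (derivative^[j + 1] P).eval (t : ℂ)) := by
          simp only [hg]
          have : ((-1 : ℂ) ^ (j + 1)) = -(-1 : ℂ) ^ j := by ring
          rw [this]
          push_cast
          ring_nf
        rw [h2]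
        simp only [hg]
        rw [← h1]
        ring
      rw [Finset.mul_sum, ← Finset.sum_add_distrib]
      rw [Finset.sum_congr rfl fun j _ => hterm j, Finset.sum_range_sub' g (N + 1)]
      have hz : derivative^[N + 1] P = 0 :=
        iterate_derivative_eq_zero (lt_of_le_of_lt hN (Nat.lt_succ_self N))
      simp [hg, hz]
    rw [← htel]
    ring
  have hcont : IntervalIntegrable (fun s : ℝ => Complex.exp (μ * s) * P.eval (s : ℂ))
      MeasureTheory.volume (-1 : ℝ) 0 := by
    apply Continuous.intervalIntegrable
    exact (Complex.continuous_exp.comp (continuous_const.mul Complex.continuous_ofReal)).mul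
      (P.continuous_aeval.comp Complex.continuous_ofReal)
  have := intervalIntegral.integral_eq_sub_of_hasDerivAt (fun t _ => hderiv t) hcont
  rw [this, hF]
  push_cast
  simp [mul_comm]

open Polynomial in
theorem oscillatory_ibp_expansion (m : ℕ) :
    ∃ c d : Fin (m + 1) → ℂ,
      c 0 = (Nat.factorial m : ℂ) ∧
      d 0 = (-1 : ℂ) ^ (m + 1) * (Nat.factorial m : ℂ) ∧
      ∀ lam : ℝ, lam ≠ 0 →
        (∫ s in (-1 : ℝ)..0,
            Complex.exp (Complex.I * lam * s) * (-s : ℂ) ^ m * (1 + (s : ℂ)) ^ m)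
          = (∑ k : Fin (m + 1), c k * (Complex.I * lam) ^ (-(m + 1 + (k : ℕ) : ℤ)))
            + Complex.exp (-(Complex.I * lam)) *
              ∑ k : Fin (m + 1), d k * (Complex.I * lam) ^ (-(m + 1 + (k : ℕ) : ℤ)) := by
  classical
  set P : Polynomial ℂ := (-X) ^ m * (1 + X) ^ m with hPdef
  -- Taylor expansions at 0 and -1
  have hT0 : taylor (0 : ℂ) P = C ((-1 : ℂ) ^ m) * (X ^ m * (1 + X) ^ m) := by
    rw [taylor_zero, hPdef, neg_pow]
    rw [← C_1, ← C_neg, ← C_pow]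
    ring_nf
  have hTm1 : taylor (-1 : ℂ) P = (1 - X) ^ m * X ^ m := by
    rw [taylor_apply, hPdef]
    simp only [mul_comp, pow_comp, neg_comp, X_comp, add_comp, one_comp]
    have hC : (C (-1 : ℂ)) = -1 := by simp
    rw [hC]
    ring
  have hcoeff0 : ∀ j < m, (taylor (0 : ℂ) P).coeff j = 0 := by
    intro j hj
    rw [hT0, coeff_C_mul, coeff_X_pow_mul', if_neg (not_le.mpr hj), mul_zero]
  have hcoeffm1 : ∀ j < m, (taylor (-1 : ℂ) P).coeff j = 0 := by
    intro j hj
    rw [hTm1, coeff_mul_X_pow', if_neg (not_le.mpr hj)]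
  have hlead0 : (taylor (0 : ℂ) P).coeff m = (-1 : ℂ) ^ m := by
    rw [hT0, coeff_C_mul]
    have : (X ^ m * (1 + X) ^ m : Polynomial ℂ).coeff m = ((1 + X : Polynomial ℂ) ^ m).coeff 0 := by
      rw [coeff_X_pow_mul', if_pos le_rfl, Nat.sub_self]
    rw [this, coeff_zero_eq_eval_zero]
    simp
  have hleadm1 : (taylor (-1 : ℂ) P).coeff m = 1 := by
    rw [hTm1]
    have : ((1 - X) ^ m * X ^ m : Polynomial ℂ).coeff m
        = ((1 - X : Polynomial ℂ) ^ m).coeff 0 := by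
      rw [coeff_mul_X_pow', if_pos le_rfl, Nat.sub_self]
    rw [this, coeff_zero_eq_eval_zero]
    simp
  -- coefficients
  set Cc : ℕ → ℂ := fun k => (-1 : ℂ) ^ (m + k) * (derivative^[m + k] P).eval (0 : ℂ) with hCc
  set Dd : ℕ → ℂ := fun k => -((-1 : ℂ) ^ (m + k) * (derivative^[m + k] P).eval (-1 : ℂ))
    with hDd
  refine ⟨fun k => Cc (k : ℕ), fun k => Dd (k : ℕ), ?_, ?_, ?_⟩
  · show Cc 0 = (Nat.factorial m : ℂ)
    rw [hCc]
    simp only [Nat.add_zero]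
    rw [iter_deriv_eval, hlead0]
    have h : ((-1 : ℂ)) ^ m * ((m.factorial : ℂ) * (-1) ^ m)
        = (m.factorial : ℂ) * ((-1 : ℂ) ^ (m + m)) := by rw [pow_add]; ring
    rw [h, ← two_mul, pow_mul]
    norm_num
  · show Dd 0 = (-1 : ℂ) ^ (m + 1) * (Nat.factorial m : ℂ)
    rw [hDd]
    simp only [Nat.add_zero]
    rw [iter_deriv_eval, hleadm1, mul_one]
    ring
  · intro lam hlam
    set μ : ℂ := Complex.I * lam with hμdef
    have hμ : μ ≠ 0 := by
      simp [hμdef, Complex.I_ne_zero, Complex.ofReal_ne_zero, hlam]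
    have hNdeg : P.natDegree ≤ 2 * m := by
      refine le_trans (natDegree_mul_le) ?_
      have h1 : ((-X : Polynomial ℂ) ^ m).natDegree ≤ m := by
        refine le_trans (natDegree_pow_le) ?_
        simp [natDegree_neg]
      have h2 : ((1 + X : Polynomial ℂ) ^ m).natDegree ≤ m := by
        refine le_trans (natDegree_pow_le) ?_
        have h3 : (1 + X : Polynomial ℂ).natDegree ≤ 1 := by
          refine le_trans (natDegree_add_le _ _) ?_
          simp
        calc m * (1 + X : Polynomial ℂ).natDegree ≤ m * 1 := Nat.mul_le_mul_left m h3
          _ = m := by omega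
      omega
    have hint : (∫ s in (-1 : ℝ)..0,
          Complex.exp (Complex.I * lam * s) * (-s : ℂ) ^ m * (1 + (s : ℂ)) ^ m)
        = ∫ s in (-1 : ℝ)..0, Complex.exp (μ * s) * P.eval (s : ℂ) := by
      refine intervalIntegral.integral_congr fun s _ => ?_
      rw [hPdef]
      simp [eval_mul, eval_pow, eval_add, eval_neg, eval_X, eval_one, hμdef]
      ring
    rw [hint, ibp_key P (2 * m) hNdeg μ hμ]
    -- split and evaluate each sum
    have hsplit : ∀ r : ℂ, (∀ j < m, (taylor r P).coeff j = 0) →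
        (∑ j ∈ Finset.range (2 * m + 1),
          (-1 : ℂ) ^ j * μ ^ (-(j + 1 : ℤ)) * (derivative^[j] P).eval r)
        = ∑ k ∈ Finset.range (m + 1),
          ((-1 : ℂ) ^ (m + k) * (derivative^[m + k] P).eval r) * μ ^ (-(m + 1 + k : ℤ)) := by
      intro r hvan
      have h2m : 2 * m + 1 = m + (m + 1) := by omega
      rw [h2m, Finset.sum_range_add]
      have hzero : ∑ j ∈ Finset.range m,
          (-1 : ℂ) ^ j * μ ^ (-(j + 1 : ℤ)) * (derivative^[j] P).eval r = 0 := by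
        refine Finset.sum_eq_zero fun j hj => ?_
        rw [iter_deriv_eval, hvan j (Finset.mem_range.mp hj), mul_zero, mul_zero]
      rw [hzero, zero_add]
      refine Finset.sum_congr rfl fun k _ => ?_
      have : (-(((m : ℤ) + k) + 1)) = -((m : ℤ) + 1 + k) := by ring
      push_cast
      rw [this]
      ring
    rw [hsplit 0 hcoeff0, hsplit (-1) hcoeffm1]
    rw [Fin.sum_univ_eq_sum_range (fun k => Cc k * μ ^ (-(m + 1 + (k : ℕ) : ℤ))) (m + 1),
      Fin.sum_univ_eq_sum_range (fun k => Dd k * μ ^ (-(m + 1 + (k : ℕ) : ℤ))) (m + 1)]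
    simp only [hCc, hDd, neg_mul, Finset.sum_neg_distrib]
    ring
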